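/- Let X₁,…,X_p be independent nonnegative integrable random variables, z ∈ ℕ^p, β > 0, and (X^{(k)})_{k∈ℕ} i.i.d. copies of (X₁,…,X_p). Then E[|Σ_{i=1}^p Σ_{k=1}^{z_i} (X_i^{(k)} − E X_i)|] ≤ |z|^{β+1/2} + 2|z|·Σ_{i=1}^p E[X_i·1_{X_i > |z|^β}], where |z| = z₁+…+z_p. -/

import Mathlib

open MeasureTheory ProbabilityTheory

lemma l1_le_sqrt_l2 {Ω : Type*} [MeasurableSpace Ω] {μ : Measure Ω} [IsProbabilityMeasure μ]
    {f : Ω → ℝ} (hf : MemLp f 2 μ) :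
    ∫ ω, |f ω| ∂μ ≤ Real.sqrt (∫ ω, (f ω)^2 ∂μ) := by
  have h2 : (2:ℝ).HolderConjugate 2 := Real.HolderConjugate.two_two
  have habs : MemLp (fun ω => |f ω|) (ENNReal.ofReal 2) μ := by
    have : ENNReal.ofReal 2 = 2 := by simp [ENNReal.ofReal_ofNat]
    rw [this]
    simpa [abs] using hf.norm
  have hone : MemLp (fun _ : Ω => (1:ℝ)) (ENNReal.ofReal 2) μ := memLp_const 1
  calc ∫ ω, |f ω| ∂μ = ∫ ω, |f ω| * 1 ∂μ := by simp
    _ ≤ (∫ ω, |f ω| ^ (2:ℝ) ∂μ) ^ (1/(2:ℝ)) * (∫ ω, (1:ℝ) ^ (2:ℝ) ∂μ) ^ (1/(2:ℝ)) :=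
        integral_mul_le_Lp_mul_Lq_of_nonneg h2 (ae_of_all _ fun ω => abs_nonneg _)
          (ae_of_all _ fun _ => zero_le_one) habs hone
    _ = Real.sqrt (∫ ω, (f ω)^2 ∂μ) := by
        have h1 : ∀ x : ℝ, |x| ^ (2:ℝ) = x ^ 2 := fun x => by
          rw [show (2:ℝ) = ((2:ℕ):ℝ) by norm_num, Real.rpow_natCast, sq_abs]
        simp only [h1, Real.one_rpow, integral_const, probReal_univ, ENNReal.toReal_one,
          smul_eq_mul, mul_one, Real.sqrt_eq_rpow]

/-- For independent nonnegative integrable random variables `X₁,…,X_p`, i.i.d. copies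
`(X^{(k)})_k`, `z ∈ ℕ^p` and `β > 0`:
`E[|Σᵢ Σ_{k<zᵢ} (Xᵢ^{(k)} − E Xᵢ)|] ≤ |z|^{β+1/2} + 2|z|·Σᵢ E[Xᵢ·1_{Xᵢ > |z|^β}]`,
where `|z| = z₁+⋯+z_p`. -/
theorem truncation_L1_bound {Ω : Type*} [MeasurableSpace Ω]
    (μ : Measure Ω) [IsProbabilityMeasure μ] {p : ℕ}
    (X : ℕ → Fin p → Ω → ℝ)
    (hmeas : ∀ k i, Measurable (X k i))
    (hnn : ∀ k i ω, 0 ≤ X k i ω)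
    (hint : ∀ k i, Integrable (X k i) μ)
    (hindep : iIndepFun (fun ki : ℕ × Fin p => X ki.1 ki.2) μ)
    (hident : ∀ k i, IdentDistrib (X k i) (X 0 i) μ μ)
    (z : Fin p → ℕ) (β : ℝ) (hβ : 0 < β) :
    ∫ ω, |∑ i, ∑ k ∈ Finset.range (z i), (X k i ω - ∫ ω', X 0 i ω' ∂μ)| ∂μ
      ≤ ((∑ i, z i : ℕ) : ℝ) ^ (β + 1/2)
        + 2 * ((∑ i, z i : ℕ) : ℝ) *
          ∑ i, ∫ ω, (if ((∑ i, z i : ℕ) : ℝ) ^ β < X 0 i ω then X 0 i ω else 0) ∂μ := by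
  classical
  set N : ℕ := ∑ i, z i with hNdef
  by_cases hN0 : N = 0
  · have hz : ∀ i, z i = 0 := fun i =>
      (Finset.sum_eq_zero_iff.mp hN0) i (Finset.mem_univ i)
    simp only [hz, Finset.range_zero, Finset.sum_empty, Finset.sum_const_zero, abs_zero,
      integral_zero, hN0, Nat.cast_zero, mul_zero, zero_mul, add_zero]
    rw [Real.zero_rpow (by positivity)]
  -- main case
  have hNpos : (0:ℝ) < (N:ℝ) := by exact_mod_cast Nat.pos_of_ne_zero hN0
  have hzN : ∀ i, z i ≤ N := fun i =>
    Finset.single_le_sum (f := fun i => z i) (fun i _ => Nat.zero_le _) (Finset.mem_univ i)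
  set T : ℝ := (N:ℝ) ^ β with hTdef
  have hT0 : 0 < T := Real.rpow_pos_of_pos hNpos β
  set g : ℝ → ℝ := fun x => if x ≤ T then x else 0 with hgdef
  set h : ℝ → ℝ := fun x => if T < x then x else 0 with hhdef
  have hgm : Measurable g :=
    Measurable.ite (measurableSet_le measurable_id measurable_const) measurable_id
      measurable_const
  have hhm : Measurable h :=
    Measurable.ite (measurableSet_lt measurable_const measurable_id) measurable_id
      measurable_const
  have hgh : ∀ x : ℝ, g x + h x = x := fun x => by
    simp only [hgdef, hhdef]
    rcases le_or_gt x T with hx | hx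
    · rw [if_pos hx, if_neg (not_lt.mpr hx), add_zero]
    · rw [if_neg (not_le.mpr hx), if_pos hx, zero_add]
  have hg_abs : ∀ x : ℝ, 0 ≤ x → |g x| ≤ T := fun x hx => by
    simp only [hgdef]; split_ifs with h1
    · rw [abs_of_nonneg hx]; exact h1
    · simpa using hT0.le
  have hg_lex : ∀ x : ℝ, 0 ≤ x → |g x| ≤ x := fun x hx => by
    simp only [hgdef]; split_ifs with h1
    · rw [abs_of_nonneg hx]
    · simpa using hx
  have hh_nonneg : ∀ x : ℝ, 0 ≤ x → 0 ≤ h x := fun x hx => by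
    simp only [hhdef]; split_ifs <;> simp [hx]
  have hh_lex : ∀ x : ℝ, 0 ≤ x → |h x| ≤ x := fun x hx => by
    simp only [hhdef]; split_ifs with h1
    · rw [abs_of_nonneg hx]
    · simpa using hx
  set Y : ℕ → Fin p → Ω → ℝ := fun k i => g ∘ X k i with hYdef
  set Z : ℕ → Fin p → Ω → ℝ := fun k i => h ∘ X k i with hZdef
  have hYm : ∀ k i, Measurable (Y k i) := fun k i => hgm.comp (hmeas k i)
  have hZm : ∀ k i, Measurable (Z k i) := fun k i => hhm.comp (hmeas k i)
  have hYint : ∀ k i, Integrable (Y k i) μ := fun k i =>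
    (hint k i).mono' (hYm k i).aestronglyMeasurable
      (ae_of_all _ fun ω => hg_lex _ (hnn k i ω))
  have hZint : ∀ k i, Integrable (Z k i) μ := fun k i =>
    (hint k i).mono' (hZm k i).aestronglyMeasurable
      (ae_of_all _ fun ω => hh_lex _ (hnn k i ω))
  have hYL2 : ∀ k i, MemLp (Y k i) 2 μ := fun k i =>
    MemLp.of_bound (hYm k i).aestronglyMeasurable T
      (ae_of_all _ fun ω => hg_abs _ (hnn k i ω))
  have hYid : ∀ k i, IdentDistrib (Y k i) (Y 0 i) μ μ := fun k i => (hident k i).comp hgm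
  have hZid : ∀ k i, IdentDistrib (Z k i) (Z 0 i) μ μ := fun k i => (hident k i).comp hhm
  set my : Fin p → ℝ := fun i => ∫ ω, Y 0 i ω ∂μ with hmydef
  set mz : Fin p → ℝ := fun i => ∫ ω, Z 0 i ω ∂μ with hmzdef
  have hmz_nonneg : ∀ i, 0 ≤ mz i := fun i =>
    integral_nonneg fun ω => hh_nonneg _ (hnn 0 i ω)
  have hEX_split : ∀ i, (∫ ω', X 0 i ω' ∂μ) = my i + mz i := by
    intro i
    have : (∫ ω', X 0 i ω' ∂μ) = ∫ ω', (Y 0 i ω' + Z 0 i ω') ∂μ := by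
      refine integral_congr_ae (ae_of_all _ fun ω => ?_)
      exact (hgh (X 0 i ω)).symm
    rw [this, integral_add (hYint 0 i) (hZint 0 i)]
  set A : Ω → ℝ := fun ω => ∑ i, ∑ k ∈ Finset.range (z i), (Y k i ω - my i) with hAdef
  set B : Ω → ℝ := fun ω => ∑ i, ∑ k ∈ Finset.range (z i), (Z k i ω - mz i) with hBdef
  have hAint : Integrable A μ := by
    refine integrable_finset_sum _ fun i _ => integrable_finset_sum _ fun k _ => ?_
    exact (hYint k i).sub (integrable_const _)
  have hBint : Integrable B μ := by
    refine integrable_finset_sum _ fun i _ => integrable_finset_sum _ fun k _ => ?_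
    exact (hZint k i).sub (integrable_const _)
  have hsplit : ∀ ω, (∑ i, ∑ k ∈ Finset.range (z i), (X k i ω - ∫ ω', X 0 i ω' ∂μ))
      = A ω + B ω := by
    intro ω
    have : A ω + B ω
        = ∑ i, ∑ k ∈ Finset.range (z i), ((Y k i ω - my i) + (Z k i ω - mz i)) := by
      simp only [hAdef, hBdef, ← Finset.sum_add_distrib]
    rw [this]
    refine Finset.sum_congr rfl fun i _ => Finset.sum_congr rfl fun k _ => ?_
    rw [hEX_split i]
    have := hgh (X k i ω)
    simp only [hYdef, hZdef, Function.comp_apply]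
    linarith
  -- bound for B
  have hB : ∫ ω, |B ω| ∂μ ≤ 2 * (N:ℝ) * ∑ i, mz i := by
    have habsint : ∀ (i : Fin p), ∀ k, Integrable (fun ω => |Z k i ω - mz i|) μ :=
      fun i k => ((hZint k i).sub (integrable_const _)).abs
    have step1 : ∫ ω, |B ω| ∂μ
        ≤ ∫ ω, ∑ i, ∑ k ∈ Finset.range (z i), |Z k i ω - mz i| ∂μ := by
      refine integral_mono hBint.abs
        (integrable_finset_sum _ fun i _ => integrable_finset_sum _ fun k _ => habsint i k)
        fun ω => ?_
      calc |B ω| ≤ ∑ i, |∑ k ∈ Finset.range (z i), (Z k i ω - mz i)| :=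
            Finset.abs_sum_le_sum_abs _ _
        _ ≤ ∑ i, ∑ k ∈ Finset.range (z i), |Z k i ω - mz i| :=
            Finset.sum_le_sum fun i _ => Finset.abs_sum_le_sum_abs _ _
    have step2 : ∫ ω, ∑ i, ∑ k ∈ Finset.range (z i), |Z k i ω - mz i| ∂μ
        = ∑ i, ∑ k ∈ Finset.range (z i), ∫ ω, |Z k i ω - mz i| ∂μ := by
      rw [integral_finset_sum _ fun i _ =>
        integrable_finset_sum _ fun k _ => habsint i k]
      exact Finset.sum_congr rfl fun i _ => integral_finset_sum _ fun k _ => habsint i k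
    have step3 : ∀ (i : Fin p) (k : ℕ), ∫ ω, |Z k i ω - mz i| ∂μ ≤ 2 * mz i := by
      intro i k
      have h1 : ∫ ω, |Z k i ω - mz i| ∂μ ≤ ∫ ω, (Z k i ω + mz i) ∂μ := by
        refine integral_mono (habsint i k) ((hZint k i).add (integrable_const _)) fun ω => ?_
        have h2 : 0 ≤ Z k i ω := hh_nonneg _ (hnn k i ω)
        have h3 := hmz_nonneg i
        rw [abs_sub_comm]
        calc |mz i - Z k i ω| ≤ |mz i| + |Z k i ω| := abs_sub _ _
          _ = Z k i ω + mz i := by rw [abs_of_nonneg h2, abs_of_nonneg h3]; ring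
      rw [integral_add (hZint k i) (integrable_const _), (hZid k i).integral_eq] at h1
      simpa [integral_const, two_mul] using h1
    calc ∫ ω, |B ω| ∂μ ≤ ∑ i, ∑ k ∈ Finset.range (z i), ∫ ω, |Z k i ω - mz i| ∂μ :=
          step1.trans_eq step2
      _ ≤ ∑ i, ∑ k ∈ Finset.range (z i), 2 * mz i :=
          Finset.sum_le_sum fun i _ => Finset.sum_le_sum fun k _ => step3 i k
      _ = ∑ i, (z i : ℝ) * (2 * mz i) := by
          simp [Finset.sum_const, nsmul_eq_mul]
      _ ≤ ∑ i, (N : ℝ) * (2 * mz i) := by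
          refine Finset.sum_le_sum fun i _ => ?_
          have : (z i : ℝ) ≤ (N : ℝ) := by exact_mod_cast hzN i
          have := hmz_nonneg i
          nlinarith
      _ = 2 * (N:ℝ) * ∑ i, mz i := by
          rw [Finset.mul_sum]; refine Finset.sum_congr rfl fun i _ => by ring
  -- bound for A
  set S : Finset (ℕ × Fin p) :=
    (Finset.range N ×ˢ Finset.univ).filter (fun ki => ki.1 < z ki.2) with hSdef
  have hrange : ∀ i : Fin p,
      (Finset.range N).filter (fun k => k < z i) = Finset.range (z i) := by
    intro i
    ext k
    simp only [Finset.mem_filter, Finset.mem_range]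
    have := hzN i
    omega
  have hsum_S : ∀ f : ℕ × Fin p → ℝ,
      ∑ ki ∈ S, f ki = ∑ i, ∑ k ∈ Finset.range (z i), f (k, i) := by
    intro f
    rw [hSdef, Finset.sum_filter, Finset.sum_product, Finset.sum_comm]
    refine Finset.sum_congr rfl fun i _ => ?_
    rw [← hrange i, Finset.sum_filter]
  set W : Ω → ℝ := ∑ ki ∈ S, Y ki.1 ki.2 with hWdef
  have hW_apply : ∀ ω, W ω = ∑ ki ∈ S, Y ki.1 ki.2 ω := fun ω => by
    rw [hWdef]; exact Finset.sum_apply ω S _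
  have hWL2 : MemLp W 2 μ :=
    memLp_finset_sum' _ fun ki _ => hYL2 ki.1 ki.2
  have hEW : (∫ ω, W ω ∂μ) = ∑ ki ∈ S, my ki.2 := by
    have : (∫ ω, W ω ∂μ) = ∑ ki ∈ S, ∫ ω, Y ki.1 ki.2 ω ∂μ := by
      simp only [hW_apply]
      exact integral_finset_sum _ fun ki _ => hYint ki.1 ki.2
    rw [this]
    exact Finset.sum_congr rfl fun ki _ => (hYid ki.1 ki.2).integral_eq
  have hA_eq : ∀ ω, A ω = W ω - ∫ ω', W ω' ∂μ := by
    intro ω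
    rw [hEW, hW_apply, ← Finset.sum_sub_distrib, hAdef]
    exact (hsum_S fun ki => Y ki.1 ki.2 ω - my ki.2).symm
  have hAL2 : MemLp A 2 μ := by
    have : A = fun ω => W ω - ∫ ω', W ω' ∂μ := funext hA_eq
    rw [this]
    exact hWL2.sub (memLp_const _)
  have hvarW : variance W μ ≤ (N:ℝ) * T^2 := by
    have hvs : variance W μ = ∑ ki ∈ S, variance (Y ki.1 ki.2) μ := by
      rw [hWdef]
      refine IndepFun.variance_sum (fun ki _ => hYL2 ki.1 ki.2) ?_
      intro ki _ kj _ hne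
      exact (hindep.indepFun hne).comp hgm hgm
    rw [hvs]
    have hvar_each : ∀ ki : ℕ × Fin p, variance (Y ki.1 ki.2) μ ≤ T^2 := by
      intro ki
      refine (variance_le_expectation_sq (hYm ki.1 ki.2).aestronglyMeasurable).trans ?_
      have : (∫ ω, (Y ki.1 ki.2 ^ 2) ω ∂μ) ≤ ∫ _ω, T^2 ∂μ := by
        refine integral_mono (hYL2 ki.1 ki.2).integrable_sq (integrable_const _) fun ω => ?_
        simp only [Pi.pow_apply]
        have hb' : |Y ki.1 ki.2 ω| ≤ T := hg_abs (X ki.1 ki.2 ω) (hnn ki.1 ki.2 ω)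
        calc (Y ki.1 ki.2 ω)^2 = |Y ki.1 ki.2 ω|^2 := (sq_abs _).symm
          _ ≤ T^2 := by nlinarith [abs_nonneg (Y ki.1 ki.2 ω)]
      simpa [integral_const] using this
    calc ∑ ki ∈ S, variance (Y ki.1 ki.2) μ ≤ ∑ _ki ∈ S, T^2 :=
          Finset.sum_le_sum fun ki _ => hvar_each ki
      _ = (S.card : ℝ) * T^2 := by rw [Finset.sum_const, nsmul_eq_mul]
      _ = (N:ℝ) * T^2 := by
          congr 1
          have : (S.card : ℝ) = ∑ ki ∈ S, (1:ℝ) := by simp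
          rw [this, hsum_S fun _ => (1:ℝ)]
          push_cast [hNdef]
          simp
  have hA : ∫ ω, |A ω| ∂μ ≤ (N:ℝ) ^ (β + 1/2) := by
    have h1 : ∫ ω, |A ω| ∂μ ≤ Real.sqrt (∫ ω, (A ω)^2 ∂μ) := l1_le_sqrt_l2 hAL2
    have h2 : (∫ ω, (A ω)^2 ∂μ) = variance W μ := by
      rw [variance_eq_integral hWL2.aestronglyMeasurable.aemeasurable]
      refine integral_congr_ae (ae_of_all _ fun ω => ?_)
      simp only [Pi.pow_apply, Pi.sub_apply, hA_eq ω]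
    rw [h2] at h1
    refine h1.trans ?_
    refine (Real.sqrt_le_sqrt hvarW).trans_eq ?_
    rw [Real.sqrt_mul hNpos.le, Real.sqrt_sq hT0.le, Real.sqrt_eq_rpow, hTdef,
      ← Real.rpow_add hNpos, add_comm]
  -- combine
  have hLHS : ∫ ω, |∑ i, ∑ k ∈ Finset.range (z i), (X k i ω - ∫ ω', X 0 i ω' ∂μ)| ∂μ
      ≤ (∫ ω, |A ω| ∂μ) + ∫ ω, |B ω| ∂μ := by
    have e1 : ∫ ω, |∑ i, ∑ k ∈ Finset.range (z i), (X k i ω - ∫ ω', X 0 i ω' ∂μ)| ∂μ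
        = ∫ ω, |A ω + B ω| ∂μ := by
      refine integral_congr_ae (ae_of_all _ fun ω => ?_)
      simp only [hsplit]
    rw [e1]
    calc ∫ ω, |A ω + B ω| ∂μ ≤ ∫ ω, (|A ω| + |B ω|) ∂μ :=
          integral_mono (hAint.add hBint).abs (hAint.abs.add hBint.abs)
            fun ω => abs_add_le _ _
      _ = (∫ ω, |A ω| ∂μ) + ∫ ω, |B ω| ∂μ := integral_add hAint.abs hBint.abs
  have hRHS : (∑ i, ∫ ω, (if T < X 0 i ω then X 0 i ω else 0) ∂μ)
      = ∑ i, mz i := by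
    refine Finset.sum_congr rfl fun i _ => ?_
    rfl
  rw [hRHS]
  calc ∫ ω, |∑ i, ∑ k ∈ Finset.range (z i), (X k i ω - ∫ ω', X 0 i ω' ∂μ)| ∂μ
      ≤ (∫ ω, |A ω| ∂μ) + ∫ ω, |B ω| ∂μ := hLHS
    _ ≤ (N:ℝ) ^ (β + 1/2) + 2 * (N:ℝ) * ∑ i, mz i := add_le_add hA hB
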